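/- Let J(θ) = Σᵢ F(θᵢ) with F a weakly convex sparsity inducing function with nonconvexity parameter ζ > 0 (so H(t)=F(t)+ζt² is convex), and let l be the empirical logistic loss for data matrix X ∈ ℝ^{d×N} and binary labels. If X does not have full row rank (i.e., the column space of X has dimension less than d), then the objective θ ↦ l(θ) + βJ(θ) is not convex on ℝ^d, for any β > 0. -/

import Mathlib

open scoped RealInnerProductSpace BigOperators

noncomputable def logisticLoss {d N : ℕ} (x : Fin N → EuclideanSpace ℝ (Fin d))
    (y : Fin N → ℝ) (θ : EuclideanSpace ℝ (Fin d)) : ℝ :=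
  ∑ i, (Real.log (1 + Real.exp ⟪θ, x i⟫) - y i * ⟪θ, x i⟫)

theorem weaklyConvex_logistic_nonconvex {d N : ℕ}
    (x : Fin N → EuclideanSpace ℝ (Fin d)) (y : Fin N → ℝ)
    (hy : ∀ i, y i = 0 ∨ y i = 1)
    (F : ℝ → ℝ) (ζ : ℝ) (hζ : 0 < ζ)
    (hnonneg : ∀ t, 0 ≤ F t)
    (heven : ∀ t, F (-t) = F t)
    (h0 : F 0 = 0)
    (hnontriv : ∃ t, F t ≠ 0)
    (hmono : MonotoneOn F (Set.Ici 0))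
    (hratio : AntitoneOn (fun t => F t / t) (Set.Ioi 0))
    (hH : ConvexOn ℝ Set.univ (fun t => F t + ζ * t ^ 2))
    (hζmin : ∀ ζ' : ℝ, 0 < ζ' → ConvexOn ℝ Set.univ (fun t => F t + ζ' * t ^ 2) → ζ ≤ ζ')
    (hrank : ∃ u : EuclideanSpace ℝ (Fin d), u ≠ 0 ∧ ∀ i, ⟪u, x i⟫ = 0)
    (β : ℝ) (hβ : 0 < β) :
    ¬ ConvexOn ℝ Set.univ (fun θ => logisticLoss x y θ + β * ∑ j, F (θ j)) := by
  intro hconv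
  obtain ⟨u, hu0, hux⟩ := hrank
  obtain ⟨j₀, hj₀⟩ : ∃ j, u j ≠ 0 := by
    by_contra h
    push_neg at h
    exact hu0 (by ext j; exact h j)
  -- Step 1: star-shapedness: a * F t ≤ F (a * t) for a ∈ [0,1]
  have hstar : ∀ t a : ℝ, 0 ≤ a → a ≤ 1 → a * F t ≤ F (a * t) := by
    have hpos : ∀ t a : ℝ, 0 < t → 0 < a → a ≤ 1 → a * F t ≤ F (a * t) := by
      intro t a ht ha ha1
      have hat : 0 < a * t := mul_pos ha ht
      have := hratio (Set.mem_Ioi.mpr hat) (Set.mem_Ioi.mpr ht)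
        (by nlinarith)
      -- F t / t ≤ F (a*t) / (a*t)
      have h1 : F t / t ≤ F (a * t) / (a * t) := this
      calc a * F t = (a * t) * (F t / t) := by field_simp
        _ ≤ (a * t) * (F (a * t) / (a * t)) := by
            exact mul_le_mul_of_nonneg_left h1 hat.le
        _ = F (a * t) := by field_simp
    intro t a ha ha1
    rcases eq_or_lt_of_le ha with rfl | ha'
    · simp [h0, hnonneg]
    rcases lt_trichotomy t 0 with ht | rfl | ht
    · have := hpos (-t) a (by linarith) ha' ha1
      rw [heven] at this
      have : a * F t ≤ F (a * -t) := this
      rwa [show a * -t = -(a * t) by ring, heven] at this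
    · simp [h0]
    · exact hpos t a ht ha' ha1
  -- logistic loss is constant along u
  have hl : ∀ r : ℝ, logisticLoss x y (r • u) = ∑ _i : Fin N, Real.log 2 := by
    intro r
    unfold logisticLoss
    refine Finset.sum_congr rfl fun i _ => ?_
    have : ⟪r • u, x i⟫ = (0 : ℝ) := by
      rw [real_inner_smul_left, hux i, mul_zero]
    rw [this]
    norm_num
  have hcoord : ∀ (r : ℝ) (j : Fin d), (r • u) j = r * u j := fun r j => rfl
  -- Step 2: F (a * t) = a * F t for a ∈ [0,1]
  have key : ∀ t a : ℝ, 0 ≤ a → a ≤ 1 → F (a * t) = a * F t := by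
    intro t a ha ha1
    set s : ℝ := t / u j₀ with hs
    have hsu : s * u j₀ = t := div_mul_cancel₀ t hj₀
    have hc := hconv.2 (Set.mem_univ (s • u)) (Set.mem_univ (0 : EuclideanSpace ℝ (Fin d)))
      ha (by linarith : (0:ℝ) ≤ 1 - a) (by ring)
    have hpt : a • (s • u) + (1 - a) • (0 : EuclideanSpace ℝ (Fin d)) = (a * s) • u := by
      rw [smul_zero, add_zero, smul_smul]
    rw [hpt] at hc
    simp only [smul_eq_mul] at hc
    have hz : ∀ j : Fin d, (0 : EuclideanSpace ℝ (Fin d)) j = 0 := fun j => rfl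
    rw [hl (a * s), hl s] at hc
    have hc0 : logisticLoss x y 0 = ∑ _i : Fin N, Real.log 2 := by
      have := hl 0
      rwa [zero_smul] at this
    rw [hc0] at hc
    simp only [hcoord, hz, h0, Finset.sum_const_zero, mul_zero, add_zero] at hc
    -- hc : ∑ log2 + β * ∑ F (a*s*u j) ≤ a * (∑ log2 + β * ∑ F (s*u j)) + (1-a)*(∑ log2)
    have hsum : ∑ j, F (a * s * u j) ≤ a * ∑ j, F (s * u j) := by nlinarith
    rw [Finset.mul_sum] at hsum
    have hle : ∀ j ∈ Finset.univ, a * F (s * u j) ≤ F (a * s * u j) := by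
      intro j _
      have := hstar (s * u j) a ha ha1
      rwa [← mul_assoc] at this
    have heq := (Finset.sum_eq_sum_iff_of_le hle).mp
      (le_antisymm (Finset.sum_le_sum hle) hsum)
    have := (heq j₀ (Finset.mem_univ j₀)).symm
    rw [mul_assoc, hsu] at this
    exact this
  -- Step 3: F is linear: F t = F 1 * |t|
  have hlin : ∀ t : ℝ, F t = F 1 * |t| := by
    have hpos : ∀ t : ℝ, 0 < t → F t = F 1 * t := by
      intro t ht
      rcases le_or_gt t 1 with h | h
      · have := key 1 t ht.le h
        rw [mul_one] at this
        rw [this]; ring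
      · have := key t (1/t) (by positivity) (by
          rw [div_le_one ht]; linarith)
        rw [one_div, inv_mul_cancel₀ (by linarith)] at this
        rw [eq_comm, inv_mul_eq_iff_eq_mul₀ (by positivity)] at this
        rw [this]; ring
    intro t
    rcases lt_trichotomy t 0 with ht | rfl | ht
    · rw [← heven t, hpos (-t) (by linarith), abs_of_neg ht]
    · simp [h0]
    · rw [hpos t ht, abs_of_pos ht]
  -- Step 4: F + (ζ/2) t² is convex, contradicting minimality of ζ
  have hconv' : ConvexOn ℝ Set.univ (fun t : ℝ => F t + (ζ/2) * t ^ 2) := by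
    have h1 : ConvexOn ℝ Set.univ (fun t : ℝ => F 1 * |t|) := by
      have := (convexOn_univ_norm (E := ℝ)).smul (hnonneg 1)
      simpa [smul_eq_mul, Real.norm_eq_abs] using this
    have h2 : ConvexOn ℝ Set.univ (fun t : ℝ => (ζ/2) * t ^ 2) := by
      have := (Even.convexOn_pow (even_two)).smul (by linarith : (0:ℝ) ≤ ζ/2)
      simpa [smul_eq_mul] using this
    have hfe : (fun t : ℝ => F t + (ζ/2) * t ^ 2)
        = fun t : ℝ => F 1 * |t| + (ζ/2) * t ^ 2 := funext fun t => by rw [hlin t]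
    rw [hfe]
    exact h1.add h2
  have := hζmin (ζ/2) (by linarith) hconv'
  linarith
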